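/- Let γ : [0,1] → ℝ be continuously differentiable with γ(0) = 0 and γ(1) = 1. Define η^pu(t) = α·γ(t) + (1−α)·t and γ^pu(t) = β·γ(t) + (1−β)·t, AUC = ∫₀¹ γ(t) dt, and AUC^pu = ∫₀¹ γ^pu(t) · (d η^pu/dt)(t) dt. Then AUC^pu = (1 − (β − α))/2 + (β − α)·AUC. -/

import Mathlib

theorem aucpu_formula (α β : ℝ) (γ γ' : ℝ → ℝ)
    (hderiv : ∀ t ∈ Set.Icc (0 : ℝ) 1, HasDerivAt γ (γ' t) t)
    (hcont : ContinuousOn γ' (Set.Icc (0 : ℝ) 1))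
    (h0 : γ 0 = 0) (h1 : γ 1 = 1) :
    (∫ t in (0 : ℝ)..1, (β * γ t + (1 - β) * t) * (α * γ' t + (1 - α))) =
      (1 - (β - α)) / 2 + (β - α) * ∫ t in (0 : ℝ)..1, γ t := by
  have huIcc : Set.uIcc (0 : ℝ) 1 = Set.Icc (0 : ℝ) 1 := Set.uIcc_of_le (by norm_num)
  have hderiv' : ∀ t ∈ Set.uIcc (0 : ℝ) 1, HasDerivAt γ (γ' t) t := by
    rw [huIcc]; exact hderiv
  have hcont' : ContinuousOn γ' (Set.uIcc (0 : ℝ) 1) := by rw [huIcc]; exact hcont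
  have hγcont : ContinuousOn γ (Set.uIcc (0 : ℝ) 1) := fun t ht =>
    ((hderiv' t ht).continuousAt).continuousWithinAt
  have hintγ' : IntervalIntegrable γ' MeasureTheory.volume 0 1 :=
    hcont'.intervalIntegrable
  have hintγ : IntervalIntegrable γ MeasureTheory.volume 0 1 :=
    hγcont.intervalIntegrable
  have hintγγ' : IntervalIntegrable (fun t => γ t * γ' t) MeasureTheory.volume 0 1 :=
    (hγcont.mul hcont').intervalIntegrable
  have hinttγ' : IntervalIntegrable (fun t => t * γ' t) MeasureTheory.volume 0 1 :=
    (continuousOn_id.mul hcont').intervalIntegrable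
  -- ∫ γ γ' = 1/2
  have I1 : (∫ t in (0:ℝ)..1, γ t * γ' t) = 1 / 2 := by
    have h : ∀ t ∈ Set.uIcc (0:ℝ) 1,
        HasDerivAt (fun t => (γ t) ^ 2 / 2) (γ t * γ' t) t := by
      intro t ht
      have := (((hderiv' t ht).mul (hderiv' t ht)).div_const 2)
      have e : (fun t => (γ t) ^ 2 / 2) = fun x => (γ * γ) x / 2 := by
        funext x; simp only [Pi.mul_apply]; ring
      rw [e]; exact this.congr_deriv (by ring)
    have := intervalIntegral.integral_eq_sub_of_hasDerivAt h hintγγ'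
    rw [this, h0, h1]; norm_num
  -- ∫ t γ' = 1 - ∫ γ
  have I2 : (∫ t in (0:ℝ)..1, t * γ' t) = 1 - ∫ t in (0:ℝ)..1, γ t := by
    have h := intervalIntegral.integral_mul_deriv_eq_deriv_mul
      (u := fun t : ℝ => t) (u' := fun _ : ℝ => (1:ℝ)) (v := γ) (v' := γ')
      (fun t _ => hasDerivAt_id t) hderiv'
      (intervalIntegrable_const) hintγ'
    simp only [one_mul] at h
    rw [h, h0, h1]; ring
  have I3 : (∫ t in (0:ℝ)..1, t) = 1 / 2 := by simp
  have hintid : IntervalIntegrable (fun t : ℝ => t) MeasureTheory.volume 0 1 :=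
    continuous_id.intervalIntegrable _ _
  have expand : ∀ t : ℝ, (β * γ t + (1 - β) * t) * (α * γ' t + (1 - α)) =
      α * β * (γ t * γ' t) + α * (1 - β) * (t * γ' t) + ((1 - α) * β * γ t
        + (1 - α) * (1 - β) * t) := by
    intro t; ring
  rw [intervalIntegral.integral_congr (fun t _ => expand t)]
  rw [intervalIntegral.integral_add
      (((hintγγ'.const_mul _).add (hinttγ'.const_mul _)))
      ((hintγ.const_mul _).add (hintid.const_mul _)),
    intervalIntegral.integral_add (hintγγ'.const_mul _) (hinttγ'.const_mul _),
    intervalIntegral.integral_add (hintγ.const_mul _) (hintid.const_mul _),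
    intervalIntegral.integral_const_mul, intervalIntegral.integral_const_mul,
    intervalIntegral.integral_const_mul, intervalIntegral.integral_const_mul,
    I1, I2, I3]
  ring
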